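/- arXiv:2411.14336 — 4 statements merged into one kernel-verified Lean document; each statement's English description precedes it below -/
import Mathlib

section
/- Let m ≥ 1 and let E_1, …, E_m be independent, identically distributed random variables on a probability space that are almost surely nonnegative. Then for every s ≥ 0, P(Σ_{j=1}^m E_j ≤ s) ≤ C(m, ⌈m/2⌉) · P(E_1 ≤ 2s/m)^{⌈m/2⌉}, where C(m, ⌈m/2⌉) is the binomial coefficient 'm choose ⌈m/2⌉'. (Indeed, if the sum is at most s then at most m/2 of the E_j can exceed 2s/m, so at least ⌈m/2⌉ of them are at most 2s/m.) -/
open MeasureTheory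
open scoped ENNReal

/-- If `E_1, …, E_m` are i.i.d. almost surely nonnegative real random variables, then for
every `s ≥ 0`, `P(Σⱼ Eⱼ ≤ s) ≤ C(m, ⌈m/2⌉) · P(E_1 ≤ 2s/m)^{⌈m/2⌉}`, where
`⌈m/2⌉ = (m+1)/2` (in ℕ) and `C(·,·)` is the binomial coefficient. -/
theorem sum_small_implies_many_small (m : ℕ) (hm : 1 ≤ m)
    {Ω : Type*} [MeasurableSpace Ω] (ℙ : Measure Ω) [IsProbabilityMeasure ℙ]
    (E : Fin m → Ω → ℝ) (hmeas : ∀ j, Measurable (E j))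
    (hindep : ProbabilityTheory.iIndepFun E ℙ)
    (hident : ∀ j, ℙ.map (E j) = ℙ.map (E ⟨0, hm⟩))
    (hnonneg : ∀ j, ∀ᵐ ω ∂ℙ, 0 ≤ E j ω)
    (s : ℝ) (hs : 0 ≤ s) :
    ℙ {ω | ∑ j, E j ω ≤ s}
      ≤ (m.choose ((m + 1) / 2)) *
        ℙ {ω | E ⟨0, hm⟩ ω ≤ 2 * s / m} ^ ((m + 1) / 2) := by
  set k := (m + 1) / 2 with hk
  set c := 2 * s / m with hc
  have hm' : (0:ℝ) < m := by exact_mod_cast hm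
  set U : Set Ω := ⋃ T ∈ Finset.univ.powersetCard k,
      ⋂ j ∈ T, E j ⁻¹' Set.Iic c with hU
  have hsubset : {ω | ∑ j, E j ω ≤ s} ≤ᶠ[ae ℙ] U := by
    have hae : ∀ᵐ ω ∂ℙ, ∀ j, 0 ≤ E j ω := ae_all_iff.mpr hnonneg
    filter_upwards [hae] with ω hω hsum
    set A := Finset.univ.filter (fun j => E j ω ≤ c) with hA
    have hcard : k ≤ A.card := by
      by_contra h
      push_neg at h
      set B := Finset.univ.filter (fun j => ¬ E j ω ≤ c) with hB
      have hAB : A.card + B.card = m := by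
        rw [hA, hB, Finset.card_filter_add_card_filter_not]
        simp
      have hkm : 2 * k ≥ m := by omega
      have hBk : k ≤ B.card := by omega
      have hBne : B.Nonempty := Finset.card_pos.mp (by omega)
      have h1 : ∑ _j ∈ B, c < ∑ j ∈ B, E j ω :=
        Finset.sum_lt_sum_of_nonempty hBne
          (fun j hj => not_le.mp (Finset.mem_filter.mp hj).2)
      have h2 : ∑ j ∈ B, E j ω ≤ ∑ j, E j ω :=
        Finset.sum_le_sum_of_subset_of_nonneg (Finset.subset_univ B)
          (fun j _ _ => hω j)
      have h3 : ∑ _j ∈ B, c = (B.card : ℝ) * c := by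
        rw [Finset.sum_const, nsmul_eq_mul]
      have h4 : s ≤ (B.card : ℝ) * c := by
        have hkB : (m:ℝ) ≤ 2 * B.card := by exact_mod_cast (by omega : m ≤ 2 * B.card)
        rw [hc, mul_div_assoc', le_div_iff₀ hm']
        nlinarith
      have hsum' : ∑ j, E j ω ≤ s := hsum
      linarith
    obtain ⟨T, hTA, hTcard⟩ := Finset.exists_subset_card_eq hcard
    refine Set.mem_biUnion (Finset.mem_powersetCard_univ.mpr hTcard) ?_
    simp only [Set.mem_iInter, Set.mem_preimage, Set.mem_Iic]
    intro j hj
    exact (Finset.mem_filter.mp (hTA hj)).2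
  have hp : ∀ j, ℙ (E j ⁻¹' Set.Iic c) = ℙ (E ⟨0, hm⟩ ⁻¹' Set.Iic c) := fun j => by
    rw [← Measure.map_apply (hmeas j) measurableSet_Iic, hident j,
      Measure.map_apply (hmeas _) measurableSet_Iic]
  calc ℙ {ω | ∑ j, E j ω ≤ s} ≤ ℙ U := measure_mono_ae hsubset
    _ ≤ ∑ T ∈ Finset.univ.powersetCard k, ℙ (⋂ j ∈ T, E j ⁻¹' Set.Iic c) :=
        measure_biUnion_finset_le _ _
    _ = ∑ T ∈ Finset.univ.powersetCard k, ∏ j ∈ T, ℙ (E j ⁻¹' Set.Iic c) := by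
        refine Finset.sum_congr rfl fun T _ => ?_
        exact hindep.meas_biInter (fun j _ => ⟨Set.Iic c, measurableSet_Iic, rfl⟩)
    _ = ∑ T ∈ Finset.univ.powersetCard k, ℙ (E ⟨0, hm⟩ ⁻¹' Set.Iic c) ^ k := by
        refine Finset.sum_congr rfl fun T hT => ?_
        rw [Finset.prod_congr rfl (fun j _ => hp j), Finset.prod_const,
          (Finset.mem_powersetCard_univ.mp hT)]
    _ = (m.choose k) * ℙ (E ⟨0, hm⟩ ⁻¹' Set.Iic c) ^ k := by
        rw [Finset.sum_const, Finset.card_powersetCard, Finset.card_univ,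
          Fintype.card_fin, nsmul_eq_mul]
    _ = (m.choose k) * ℙ {ω | E ⟨0, hm⟩ ω ≤ 2 * s / m} ^ k := rfl
end

section
/- There exists k₀ ∈ ℕ such that for all integers k ≥ k₀ the following holds. Let U_1, …, U_{k−1} be independent random variables, each uniformly distributed on [1/2, 1]. Then P( ∏_{j=1}^{k−1} U_j ≥ 1/(5k) ) ≤ exp( −((k−1)/2)·( log(k−1) − log(4 log 5) − log log k − log(2e) ) ), where log denotes the natural logarithm. -/
open MeasureTheory
open scoped ENNReal

open ProbabilityTheory (iIndepFun IndepFun)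

open scoped ENNReal

lemma ofReal_prod_nonneg' {ι : Type} (s : Finset ι) (f : ι → ℝ) (hf : ∀ i ∈ s, 0 ≤ f i) :
    ENNReal.ofReal (∏ i ∈ s, f i) = ∏ i ∈ s, ENNReal.ofReal (f i) := by
  classical
  induction s using Finset.induction_on with
  | empty => simp
  | @insert i s hi ih =>
    rw [Finset.prod_insert hi, Finset.prod_insert hi,
      ENNReal.ofReal_mul (hf i (Finset.mem_insert_self i s)),
      ih fun j hj => hf j (Finset.mem_insert_of_mem hj)]

lemma lintegral_prod_indep' {Ω : Type} [MeasurableSpace Ω] {μ : Measure Ω} [IsProbabilityMeasure μ]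
    {ι : Type} (f : ι → Ω → ℝ≥0∞) (hf : ∀ j, Measurable (f j))
    (hind : iIndepFun f μ) (s : Finset ι) :
    ∫⁻ ω, ∏ j ∈ s, f j ω ∂μ = ∏ j ∈ s, ∫⁻ ω, f j ω ∂μ := by
  classical
  induction s using Finset.induction_on with
  | empty => simp
  | @insert i s hi ih =>
    rw [Finset.prod_insert hi]
    have hindep : IndepFun (f i) (fun ω => ∏ j ∈ s, f j ω) μ := by
      have := (hind.indepFun_finsetProd_of_notMem hf hi).symm
      simpa [Finset.prod_fn] using this
    rw [show (fun ω => ∏ j ∈ insert i s, f j ω) = fun ω => f i ω * ∏ j ∈ s, f j ω from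
      funext fun ω => Finset.prod_insert hi] at *
    rw [ProbabilityTheory.lintegral_mul_eq_lintegral_mul_lintegral_of_indepFun'' (hf i).aemeasurable
      (Finset.measurable_prod s fun j _ => hf j).aemeasurable hindep, ih]

lemma moment_bound' (s : ℕ) :
    ∫⁻ x, (ENNReal.ofReal x) ^ s ∂((2 : ℝ≥0∞) • volume.restrict (Set.Icc (1 / 2 : ℝ) 1))
      ≤ ENNReal.ofReal (2 / (s + 1)) := by
  rw [lintegral_smul_measure]
  have hcong : ∫⁻ x in Set.Icc (1/2 : ℝ) 1, (ENNReal.ofReal x) ^ s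
      = ∫⁻ x in Set.Icc (1/2 : ℝ) 1, ENNReal.ofReal (x ^ s) := by
    refine setLIntegral_congr_fun measurableSet_Icc (fun x hx => ?_)
    rw [ENNReal.ofReal_pow (le_trans (by norm_num) hx.1)]
  rw [hcong, ← ofReal_integral_eq_lintegral_ofReal]
  · have hval : ∫ x in Set.Icc (1/2 : ℝ) 1, x ^ s = (1 - (1/2)^(s+1)) / (s + 1) := by
      rw [MeasureTheory.integral_Icc_eq_integral_Ioc,
        ← intervalIntegral.integral_of_le (by norm_num : (1/2 : ℝ) ≤ 1), integral_pow]
      norm_num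
    rw [hval, ← ENNReal.ofReal_ofNat, smul_eq_mul, ← ENNReal.ofReal_mul (by norm_num)]
    apply ENNReal.ofReal_le_ofReal
    have h1 : (0:ℝ) < (1/2:ℝ)^(s+1) := by positivity
    have h2 : (0:ℝ) < (s:ℝ) + 1 := by positivity
    calc 2 * ((1 - (1/2:ℝ)^(s+1)) / ((s:ℝ) + 1)) = (2 * (1 - (1/2:ℝ)^(s+1))) / ((s:ℝ)+1) := by
          ring
      _ ≤ 2 / ((s:ℝ)+1) := by gcongr; nlinarith
  · exact (continuous_pow s).continuousOn.integrableOn_compact isCompact_Icc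
  · filter_upwards [ae_restrict_mem measurableSet_Icc] with x hx
    exact pow_nonneg (le_trans (by norm_num) hx.1) s

lemma num_bound' (k : ℕ) (hk : 3000 ≤ k) :
    ((k:ℝ) - 1) * Real.log (2 / (((k / 4 : ℕ) : ℝ) + 1)) + ((k / 4 : ℕ) : ℝ) * Real.log (5 * k)
      ≤ -(((k:ℝ) - 1)/2) * (Real.log ((k:ℝ) - 1) - Real.log (4 * Real.log 5)
          - Real.log (Real.log k) - Real.log (2 * Real.exp 1)) := by
  have hK : (3000:ℝ) ≤ (k:ℝ) := by exact_mod_cast hk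
  set K := (k:ℝ) with hKdef
  set S := ((k / 4 : ℕ) : ℝ) with hSdef
  have hS0 : 0 ≤ S := Nat.cast_nonneg _
  have hS1 : S ≤ K / 4 := by
    rw [hSdef, hKdef]
    exact_mod_cast Nat.cast_div_le
  have hS2 : K / 4 ≤ S + 1 := by
    have h := Nat.div_add_mod k 4
    have hm : k % 4 < 4 := Nat.mod_lt _ (by norm_num)
    have : (k:ℝ) = 4 * S + (k % 4 : ℕ) := by rw [hSdef]; exact_mod_cast h.symm
    have hm' : ((k % 4 : ℕ):ℝ) ≤ 3 := by exact_mod_cast Nat.lt_succ_iff.mp hm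
    rw [hKdef]; linarith
  have hexp1 : Real.exp 1 < 2.7182818286 := Real.exp_one_lt_d9
  have hexp1' : 0 < Real.exp 1 := Real.exp_pos 1
  have hexp8 : Real.exp 8 < 3000 := by
    have h8 : Real.exp 8 = Real.exp 1 ^ 8 := by
      rw [← Real.exp_nat_mul]; norm_num
    rw [h8]
    calc Real.exp 1 ^ 8 ≤ 2.7182818286 ^ 8 := by
          apply pow_le_pow_left₀ hexp1'.le hexp1.le
      _ < 3000 := by norm_num
  have hL : (8:ℝ) ≤ Real.log K := by
    rw [Real.le_log_iff_exp_le (by linarith)]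
    linarith
  set L := Real.log K with hLdef
  have hl2a : 0.6931471803 < Real.log 2 := Real.log_two_gt_d9
  have hl2b : Real.log 2 < 0.6931471808 := Real.log_two_lt_d9
  have hlog4 : Real.log 4 = 2 * Real.log 2 := by
    rw [show (4:ℝ) = 2^2 by norm_num, Real.log_pow]; push_cast; ring
  have hlog8 : Real.log 8 = 3 * Real.log 2 := by
    rw [show (8:ℝ) = 2^3 by norm_num, Real.log_pow]; push_cast; ring
  have hG : Real.log K - Real.log 4 ≤ Real.log (S + 1) := by
    have : Real.log (K / 4) ≤ Real.log (S + 1) :=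
      Real.log_le_log (by linarith) hS2
    rwa [Real.log_div (by linarith) (by norm_num)] at this
  have hsplit : Real.log (2 / (S + 1)) = Real.log 2 - Real.log (S + 1) :=
    Real.log_div (by norm_num) (by linarith)
  have hH : Real.log (5 * K) = Real.log 5 + L := Real.log_mul (by norm_num) (by linarith)
  have hlog5 : Real.log 5 ≤ Real.log 8 := Real.log_le_log (by norm_num) (by norm_num)
  have hlog5' : (1:ℝ) ≤ Real.log 5 := by
    rw [Real.le_log_iff_exp_le (by norm_num)]
    linarith
  have hA : Real.log 4 ≤ Real.log (4 * Real.log 5) :=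
    Real.log_le_log (by norm_num) (by nlinarith)
  have hB : (2:ℝ) ≤ Real.log L := by
    rw [Real.le_log_iff_exp_le (by linarith)]
    have h2 : Real.exp 2 = Real.exp 1 ^ 2 := by rw [← Real.exp_nat_mul]; norm_num
    nlinarith
  have hD : Real.log (2 * Real.exp 1) = Real.log 2 + 1 := by
    rw [Real.log_mul (by norm_num) (by positivity), Real.log_exp]
  have hE : Real.log (K - 1) ≤ L := Real.log_le_log (by linarith) (by linarith)
  have hHpos : 0 ≤ Real.log (5 * K) := Real.log_nonneg (by linarith)
  have q1 : (K - 1) * (L - 2 * Real.log 2) ≤ (K - 1) * Real.log (S + 1) := by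
    apply mul_le_mul_of_nonneg_left _ (by linarith)
    rw [← hlog4]; exact hG
  have q2 : S * Real.log (5 * K) ≤ (K/4) * Real.log (5 * K) :=
    mul_le_mul_of_nonneg_right hS1 hHpos
  have q3 : (K - 1) * Real.log (K - 1) ≤ (K - 1) * L :=
    mul_le_mul_of_nonneg_left hE (by linarith)
  have q4 : (K - 1) * (2 * Real.log 2) ≤ (K - 1) * Real.log (4 * Real.log 5) := by
    apply mul_le_mul_of_nonneg_left _ (by linarith)
    rw [← hlog4]; exact hA
  have q5 : (K - 1) * 2 ≤ (K - 1) * Real.log L :=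
    mul_le_mul_of_nonneg_left hB (by linarith)
  have q6 : 0 ≤ (L - 8) * (K - 2) := mul_nonneg (by linarith) (by linarith)
  have q7 : (K/4) * Real.log (5*K) = (K/4) * Real.log 5 + (K/4) * L := by rw [hH]; ring
  have q8 : (K/4) * Real.log 5 ≤ (K/4) * (3 * Real.log 2) := by
    apply mul_le_mul_of_nonneg_left _ (by linarith)
    rw [← hlog8]; exact hlog5
  have q9 : (K - 1) * Real.log 2 ≤ (K - 1) * 0.6931471808 :=
    mul_le_mul_of_nonneg_left hl2b.le (by linarith)
  have q10 : (K - 1) * 0.6931471803 ≤ (K - 1) * Real.log 2 :=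
    mul_le_mul_of_nonneg_left hl2a.le (by linarith)
  have q11 : K * Real.log 2 ≤ K * 0.6931471808 :=
    mul_le_mul_of_nonneg_left hl2b.le (by linarith)
  rw [hsplit, hD]
  linarith [q1, q2, q3, q4, q5, q6, q7, q8, q9, q10, q11]

theorem main_aux (k : ℕ) (hk : 3000 ≤ k)
    {Ω : Type} [MeasurableSpace Ω] (ℙ : Measure Ω) [IsProbabilityMeasure ℙ]
    (U : Fin (k - 1) → Ω → ℝ) (hmeas : ∀ j, Measurable (U j))
    (hind : ProbabilityTheory.iIndepFun U ℙ)
    (hmap : ∀ j, ℙ.map (U j) = (2 : ℝ≥0∞) • volume.restrict (Set.Icc (1 / 2 : ℝ) 1)) :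
    ℙ {ω | 1 / (5 * k) ≤ ∏ j, U j ω}
      ≤ ENNReal.ofReal (Real.exp (-(((k : ℝ) - 1) / 2) *
          (Real.log ((k : ℝ) - 1) - Real.log (4 * Real.log 5)
            - Real.log (Real.log k) - Real.log (2 * Real.exp 1)))) := by
  classical
  have hk1 : 1 ≤ k := le_trans (by norm_num) hk
  have hKpos : (0:ℝ) < k := by
    have : (3000:ℝ) ≤ k := by exact_mod_cast hk
    linarith
  set s : ℕ := k / 4 with hs
  set t : ℝ := 1 / (5 * k) with ht
  have htpos : 0 < t := by rw [ht]; positivity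
  -- the composed nonneg random variables
  set g : ℝ → ℝ≥0∞ := fun x => (ENNReal.ofReal x) ^ s with hg
  have hgmeas : Measurable g := ENNReal.measurable_ofReal.pow_const s
  set f : Fin (k-1) → Ω → ℝ≥0∞ := fun j ω => g (U j ω) with hf
  have hfmeas : ∀ j, Measurable (f j) := fun j => hgmeas.comp (hmeas j)
  have hfind : iIndepFun f ℙ :=
    hind.comp (fun _ => g) (fun _ => hgmeas)
  set ε : ℝ≥0∞ := (ENNReal.ofReal t) ^ s with hε
  have hε0 : ε ≠ 0 := pow_ne_zero _ (ne_of_gt (ENNReal.ofReal_pos.mpr htpos))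
  have hεtop : ε ≠ ⊤ := ENNReal.pow_ne_top ENNReal.ofReal_ne_top
  -- null set where some U j is outside [1/2,1]
  set N : Set Ω := ⋃ j, (U j) ⁻¹' (Set.Icc (1/2 : ℝ) 1)ᶜ with hN
  have hNnull : ℙ N = 0 := by
    refine measure_iUnion_null fun j => ?_
    have : ℙ ((U j) ⁻¹' (Set.Icc (1/2 : ℝ) 1)ᶜ)
        = (ℙ.map (U j)) (Set.Icc (1/2 : ℝ) 1)ᶜ := by
      rw [Measure.map_apply (hmeas j) measurableSet_Icc.compl]
    rw [this, hmap j, Measure.smul_apply,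
      Measure.restrict_apply measurableSet_Icc.compl]
    simp [Set.compl_inter_self]
  -- step 1: event inclusion
  have hstep1 : ℙ {ω | t ≤ ∏ j, U j ω} ≤ ℙ {ω | ε ≤ ∏ j, f j ω} := by
    have hsub : {ω | t ≤ ∏ j, U j ω} ⊆ {ω | ε ≤ ∏ j, f j ω} ∪ N := by
      intro ω hω
      by_cases hωN : ω ∈ N
      · exact Or.inr hωN
      · left
        have hmem : ∀ j, U j ω ∈ Set.Icc (1/2 : ℝ) 1 := by
          intro j
          by_contra hc
          exact hωN (Set.mem_iUnion.mpr ⟨j, hc⟩)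
        have hnonneg : ∀ j ∈ Finset.univ, (0:ℝ) ≤ U j ω :=
          fun j _ => le_trans (by norm_num) (hmem j).1
        have hprod : ENNReal.ofReal (∏ j, U j ω) = ∏ j, ENNReal.ofReal (U j ω) :=
          ofReal_prod_nonneg' _ _ hnonneg
        have h1 : ENNReal.ofReal t ≤ ENNReal.ofReal (∏ j, U j ω) :=
          ENNReal.ofReal_le_ofReal hω
        calc ε = (ENNReal.ofReal t) ^ s := rfl
          _ ≤ (ENNReal.ofReal (∏ j, U j ω)) ^ s := pow_le_pow_left' h1 s
          _ = (∏ j, ENNReal.ofReal (U j ω)) ^ s := by rw [hprod]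
          _ = ∏ j, (ENNReal.ofReal (U j ω)) ^ s := by
              rw [← Finset.prod_pow]
          _ = ∏ j, f j ω := rfl
    calc ℙ {ω | t ≤ ∏ j, U j ω} ≤ ℙ ({ω | ε ≤ ∏ j, f j ω} ∪ N) := measure_mono hsub
      _ ≤ ℙ {ω | ε ≤ ∏ j, f j ω} + ℙ N := measure_union_le _ _
      _ = ℙ {ω | ε ≤ ∏ j, f j ω} := by rw [hNnull, add_zero]
  -- step 2: Markov
  have hFmeas : Measurable fun ω => ∏ j, f j ω :=
    Finset.measurable_prod _ fun j _ => hfmeas j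
  have hstep2 : ℙ {ω | ε ≤ ∏ j, f j ω} ≤ (∫⁻ ω, ∏ j, f j ω ∂ℙ) / ε :=
    meas_ge_le_lintegral_div hFmeas.aemeasurable hε0 hεtop
  -- step 3: independence + moment bound
  have hmoment : ∀ j, ∫⁻ ω, f j ω ∂ℙ ≤ ENNReal.ofReal (2 / (s + 1)) := by
    intro j
    have : ∫⁻ ω, f j ω ∂ℙ = ∫⁻ x, g x ∂(ℙ.map (U j)) :=
      (lintegral_map hgmeas (hmeas j)).symm
    rw [this, hmap j]
    exact moment_bound' s
  have hstep3 : ∫⁻ ω, ∏ j, f j ω ∂ℙ ≤ (ENNReal.ofReal (2 / (s + 1))) ^ (k - 1) := by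
    rw [lintegral_prod_indep' f hfmeas hfind]
    calc ∏ j, ∫⁻ ω, f j ω ∂ℙ ≤ ∏ _j : Fin (k-1), ENNReal.ofReal (2 / (s + 1)) :=
          Finset.prod_le_prod' fun j _ => hmoment j
      _ = (ENNReal.ofReal (2 / (s + 1))) ^ (k - 1) := by
          rw [Finset.prod_const, Finset.card_univ, Fintype.card_fin]
  -- combine in ℝ≥0∞
  have hcomb : ℙ {ω | t ≤ ∏ j, U j ω}
      ≤ ENNReal.ofReal ((2 / ((s:ℝ) + 1)) ^ (k - 1) / t ^ s) := by
    refine le_trans hstep1 (le_trans hstep2 ?_)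
    have hdiv : (ENNReal.ofReal (2 / ((s:ℝ) + 1))) ^ (k - 1) / ε
        = ENNReal.ofReal ((2 / ((s:ℝ) + 1)) ^ (k - 1) / t ^ s) := by
      rw [hε, ← ENNReal.ofReal_pow htpos.le, ← ENNReal.ofReal_pow (by positivity),
        ENNReal.ofReal_div_of_pos (by positivity)]
    rw [← hdiv]
    exact ENNReal.div_le_div_right hstep3 ε
  refine le_trans hcomb (ENNReal.ofReal_le_ofReal ?_)
  -- step 5: real inequality
  have hn : ((k - 1 : ℕ) : ℝ) = (k:ℝ) - 1 := by
    push_cast [hk1]; ring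
  have hx1 : (0:ℝ) < 2 / ((s:ℝ) + 1) := by positivity
  have hx2 : (0:ℝ) < 5 * (k:ℝ) := by linarith
  have hts : t ^ s = ((5 * (k:ℝ)) ^ s)⁻¹ := by
    rw [ht, one_div, inv_pow]
  have hrw : (2 / ((s:ℝ) + 1)) ^ (k - 1) / t ^ s
      = (2 / ((s:ℝ) + 1)) ^ (k - 1) * (5 * (k:ℝ)) ^ s := by
    rw [hts, div_eq_mul_inv, inv_inv]
  have hexp1 : (2 / ((s:ℝ) + 1)) ^ (k - 1)
      = Real.exp (((k - 1 : ℕ):ℝ) * Real.log (2 / ((s:ℝ) + 1))) := by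
    rw [← Real.log_pow, Real.exp_log (by positivity)]
  have hexp2 : (5 * (k:ℝ)) ^ s = Real.exp ((s:ℝ) * Real.log (5 * (k:ℝ))) := by
    rw [← Real.log_pow, Real.exp_log (by positivity)]
  rw [hrw, hexp1, hexp2, ← Real.exp_add]
  apply Real.exp_le_exp.mpr
  rw [hn]
  exact num_bound' k hk

/-- There exists `k₀` such that for all `k ≥ k₀`: if `U_1, …, U_{k−1}` are independent
random variables, each uniform on `[1/2,1]`, then
`P(∏ⱼ Uⱼ ≥ 1/(5k)) ≤ exp(−((k−1)/2)·(log(k−1) − log(4 log 5) − log log k − log(2e)))`. -/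
theorem prod_uniform_large_tail :
    ∃ k₀ : ℕ, ∀ k : ℕ, k₀ ≤ k →
      ∀ {Ω : Type} [MeasurableSpace Ω] (ℙ : Measure Ω) [IsProbabilityMeasure ℙ]
        (U : Fin (k - 1) → Ω → ℝ), (∀ j, Measurable (U j)) →
        ProbabilityTheory.iIndepFun U ℙ →
        (∀ j, ℙ.map (U j) = (2 : ℝ≥0∞) • volume.restrict (Set.Icc (1 / 2 : ℝ) 1)) →
        ℙ {ω | 1 / (5 * k) ≤ ∏ j, U j ω}
          ≤ ENNReal.ofReal (Real.exp (-(((k : ℝ) - 1) / 2) *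
              (Real.log ((k : ℝ) - 1) - Real.log (4 * Real.log 5)
                - Real.log (Real.log k) - Real.log (2 * Real.exp 1)))) := by
  exact ⟨3000, fun k hk Ω _ ℙ _ U hmeas hind hmap =>
    main_aux k hk ℙ U hmeas hind hmap⟩
end

section
/- Let d ≥ 1 and K ≥ 1 be integers and set r = 1/(4K+4). Let i_1, …, i_{K+1} ∈ {1, …, d} and let w_1, …, w_{K+1} ∈ ℝ^d be vectors such that for each t, the coordinate w_t(i_t) lies in the open interval (r, 2r) and every other coordinate w_t(j), j ≠ i_t, lies in (0, r). Let π : ℝ^d → T^d = (ℝ/ℤ)^d be the quotient map, fix x_1 ∈ T^d arbitrary, and define x_{t+1} = x_t + π(w_t) for t = 1, …, K+1. Then for every t ∈ {1, …, K+1}: (a) the torus Euclidean distance d(x_{t+1}, x_t) equals ‖w_t‖₂, and (b) for every s with 1 ≤ s < t, d(x_{t+1}, x_t) < d(x_{t+1}, x_s); that is, the nearest point to x_{t+1} among x_1, …, x_t is x_t. -/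
/-- The `d`-dimensional flat torus `(ℝ/ℤ)^d`, equipped with the torus Euclidean
distance `d(x,y) = (Σᵢ min(|xᵢ−yᵢ|, 1−|xᵢ−yᵢ|)²)^{1/2}`. -/
noncomputable abbrev Torus (d : ℕ) : Type := PiLp 2 (fun _ : Fin d => AddCircle (1 : ℝ))

/-- The coordinatewise quotient map `π : ℝ^d → T^d`. -/
noncomputable def torusMk (d : ℕ) (x : Fin d → ℝ) : Torus d :=
  WithLp.toLp 2 (fun i => (x i : AddCircle (1 : ℝ)))

lemma dist_add_torusMk (d : ℕ) (y : Torus d) (v : Fin d → ℝ)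
    (hv : ∀ j, 0 ≤ v j ∧ v j ≤ 1 / 2) :
    dist (y + torusMk d v) y = Real.sqrt (∑ j, (v j) ^ 2) := by
  rw [PiLp.dist_eq_sum (by norm_num : 0 < (2 : ENNReal).toReal)]
  have h1 : ∀ j : Fin d, dist ((y + torusMk d v) j) (y j) = v j := by
    intro j
    have : (y + torusMk d v) j = y j + (v j : AddCircle (1 : ℝ)) := by simp [torusMk]
    rw [this, dist_self_add_left]
    rw [(AddCircle.norm_coe_eq_abs_iff (1 : ℝ) one_ne_zero).2 (by
      rw [abs_of_nonneg (hv j).1, abs_one]; exact (hv j).2)]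
    exact abs_of_nonneg (hv j).1
  simp only [h1]
  rw [Real.sqrt_eq_rpow]
  norm_num

/-- The higher-dimensional lower-bound construction. Set `r = 1/(4K+4)`. Steps
`w_t ∈ ℝ^d` (for `t = 0,…,K`, the paper's `w_1,…,w_{K+1}`) have coordinate `i_t` in
`(r, 2r)` and all other coordinates in `(0, r)`; points are `x_{t+1} = x_t + π(w_t)`
(with `x 0` the paper's `x_1`, arbitrary). Then for every `t ≤ K`:
(a) the torus distance `d(x_{t+1}, x_t)` equals the Euclidean norm `‖w_t‖₂`, and
(b) for every `s < t`, `d(x_{t+1}, x_t) < d(x_{t+1}, x_s)`, so the nearest point to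
`x_{t+1}` among the previous points is `x_t`. -/
theorem torus_staircase_nearest_neighbor (d K : ℕ) (hd : 1 ≤ d) (hK : 1 ≤ K)
    (r : ℝ) (hr : r = 1 / (4 * K + 4))
    (i : ℕ → Fin d) (w : ℕ → Fin d → ℝ)
    (hw : ∀ t : ℕ, t ≤ K →
      (r < w t (i t) ∧ w t (i t) < 2 * r) ∧
      (∀ j : Fin d, j ≠ i t → 0 < w t j ∧ w t j < r))
    (x : ℕ → Torus d)
    (hx : ∀ t : ℕ, t ≤ K → x (t + 1) = x t + torusMk d (w t)) :
    ∀ t : ℕ, t ≤ K →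
      dist (x (t + 1)) (x t) = Real.sqrt (∑ j, (w t j) ^ 2) ∧
      ∀ s : ℕ, s < t → dist (x (t + 1)) (x t) < dist (x (t + 1)) (x s) := by
  have hr0 : 0 < r := by rw [hr]; positivity
  -- each coordinate of each step is in (0, 2r)
  have hwpos : ∀ u : ℕ, u ≤ K → ∀ j : Fin d, 0 < w u j ∧ w u j < 2 * r := by
    intro u hu j
    rcases hw u hu with ⟨⟨h1, h2⟩, h3⟩
    by_cases hj : j = i u
    · subst hj; exact ⟨hr0.trans h1, h2⟩
    · rcases h3 j hj with ⟨h4, h5⟩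
      exact ⟨h4, h5.trans (by linarith)⟩
  -- x (t+1) = x s + torusMk (∑_{u∈Ico s (t+1)} w u)
  have hxs : ∀ s t : ℕ, s ≤ t → t ≤ K →
      x (t + 1) = x s + torusMk d (fun j => ∑ u ∈ Finset.Ico s (t + 1), w u j) := by
    intro s t hst
    induction t, hst using Nat.le_induction with
    | base =>
      intro hsK
      rw [hx s hsK]
      congr 1
      unfold torusMk
      congr 1
      funext j
      simp [Nat.Ico_succ_singleton]
    | succ t hst ih =>
      intro htK
      rw [hx (t + 1) htK, ih (by omega)]
      rw [add_assoc]
      congr 1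
      unfold torusMk
      rw [← WithLp.toLp_add]
      congr 1
      funext j
      show ((∑ u ∈ Finset.Ico s (t + 1), w u j : ℝ) : AddCircle (1:ℝ)) + (w (t+1) j : AddCircle (1:ℝ))
        = ((∑ u ∈ Finset.Ico s (t + 2), w u j : ℝ) : AddCircle (1:ℝ))
      rw [show Finset.Ico s (t + 2) = Finset.Ico s ((t + 1) + 1) from rfl,
        Finset.sum_Ico_succ_top (by omega : s ≤ t + 1), AddCircle.coe_add]
  -- bounds on partial sums
  have hSbd : ∀ s t : ℕ, s ≤ t → t ≤ K → ∀ j : Fin d,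
      0 ≤ (∑ u ∈ Finset.Ico s (t + 1), w u j) ∧
      (∑ u ∈ Finset.Ico s (t + 1), w u j) ≤ 1 / 2 := by
    intro s t hst htK j
    constructor
    · apply Finset.sum_nonneg
      intro u hu
      exact (hwpos u (by simp [Finset.mem_Ico] at hu; omega) j).1.le
    · calc (∑ u ∈ Finset.Ico s (t + 1), w u j)
          ≤ (Finset.Ico s (t + 1)).card • (2 * r) := by
            apply Finset.sum_le_card_nsmul
            intro u hu
            exact (hwpos u (by simp [Finset.mem_Ico] at hu; omega) j).2.le
      _ = (t + 1 - s : ℕ) * (2 * r) := by rw [Nat.card_Ico]; simp [nsmul_eq_mul]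
      _ ≤ (K + 1 : ℕ) * (2 * r) := by
            apply mul_le_mul_of_nonneg_right _ (by linarith)
            exact Nat.cast_le.mpr (by omega)
      _ ≤ 1 / 2 := by
            apply le_of_eq
            rw [hr]
            push_cast
            have hK0 : (0:ℝ) ≤ K := Nat.cast_nonneg K
            field_simp
            ring
  -- distance formula
  have hdist : ∀ s t : ℕ, s ≤ t → t ≤ K →
      dist (x (t + 1)) (x s)
        = Real.sqrt (∑ j, (∑ u ∈ Finset.Ico s (t + 1), w u j) ^ 2) := by
    intro s t hst htK
    rw [hxs s t hst htK]
    exact dist_add_torusMk d (x s) _ (hSbd s t hst htK)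
  intro t htK
  have ha : dist (x (t + 1)) (x t) = Real.sqrt (∑ j, (w t j) ^ 2) := by
    rw [hdist t t le_rfl htK]
    congr 1
    apply Finset.sum_congr rfl
    intro j _
    simp [Nat.Ico_succ_singleton]
  refine ⟨ha, ?_⟩
  intro s hst
  rw [ha, hdist s t (by omega) htK]
  haveI : NeZero d := ⟨by omega⟩
  apply Real.sqrt_lt_sqrt (Finset.sum_nonneg fun j _ => sq_nonneg _)
  apply Finset.sum_lt_sum_of_nonempty Finset.univ_nonempty
  intro j _
  have hlt : w t j < ∑ u ∈ Finset.Ico s (t + 1), w u j := by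
    rw [Finset.sum_Ico_succ_top (by omega)]
    have hpos : 0 < ∑ u ∈ Finset.Ico s t, w u j := by
      apply Finset.sum_pos
      · intro u hu
        exact (hwpos u (by simp [Finset.mem_Ico] at hu; omega) j).1
      · exact ⟨s, by simp [Finset.mem_Ico]; omega⟩
    linarith
  have h0 : 0 ≤ w t j := (hwpos t htK j).1.le
  exact pow_lt_pow_left₀ hlt h0 two_ne_zero
end

section
/- Let d ≥ 1 and K ≥ 1 be integers and set r = 1/(4K+4). For x ∈ T^d = (ℝ/ℤ)^d and i ∈ {1,…,d}, let C(x, i, r) ⊆ T^d be the open box of points y such that (in representatives) x_i + r < y_i < x_i + 2r in coordinate i and x_j < y_j < x_j + r in every coordinate j ≠ i. Let X_1, …, X_{K+2} be independent random points, each distributed according to the Haar probability measure on T^d. Then the probability that there exists a string (i_1, …, i_{K+1}) ∈ {1,…,d}^{K+1} with X_{t+1} ∈ C(X_t, i_t, r) for every t ∈ {1, …, K+1} equals d^{K+1}·(4K+4)^{−d(K+1)}. (For each fixed x, the boxes C(x, 1, r), …, C(x, d, r) are pairwise disjoint and each has measure r^d.) -/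
open MeasureTheory
open scoped ENNReal

/-- The Haar probability measure on the torus. -/
noncomputable instance (d : ℕ) : MeasureSpace (Torus d) :=
  { volume := (volume : Measure (∀ _ : Fin d, AddCircle (1 : ℝ))).map (WithLp.toLp 2) }

/-- `y` lies in the open box `C(x, i, r) ⊆ T^d`: in representatives,
`xᵢ + r < yᵢ < xᵢ + 2r` in coordinate `i` and `xⱼ < yⱼ < xⱼ + r` in every other
coordinate `j`. -/
def inTorusBox (d : ℕ) (r : ℝ) (x : Torus d) (i : Fin d) (y : Torus d) : Prop :=
  ∃ u : Fin d → ℝ, y = x + torusMk d u ∧ (r < u i ∧ u i < 2 * r) ∧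
    ∀ j : Fin d, j ≠ i → 0 < u j ∧ u j < r

instance factZeroLtOne : Fact ((0 : ℝ) < 1) := ⟨one_pos⟩

instance addCircleVolumeProb : IsProbabilityMeasure (volume : Measure (AddCircle (1 : ℝ))) :=
  ⟨by simp [AddCircle.measure_univ]⟩

instance torusVolumeProb (d : ℕ) : IsProbabilityMeasure (volume : Measure (Torus d)) :=
  Measure.isProbabilityMeasure_map (WithLp.measurable_toLp 2 _).aemeasurable

/-! ### Auxiliary lemmas -/

section Chain

open Set

variable {α : Type*} [MeasurableSpace α]

lemma chainSet_measurable {R : Set (α × α)} (hR : MeasurableSet R) (m : ℕ) :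
    MeasurableSet {f : Fin (m + 1) → α | ∀ t : Fin m, (f t.castSucc, f t.succ) ∈ R} := by
  have : {f : Fin (m + 1) → α | ∀ t : Fin m, (f t.castSucc, f t.succ) ∈ R}
      = ⋂ t : Fin m, (fun f : Fin (m + 1) → α => (f t.castSucc, f t.succ)) ⁻¹' R := by
    ext f; simp [Set.mem_iInter]
  rw [this]
  exact MeasurableSet.iInter fun t =>
    ((measurable_pi_apply _).prodMk (measurable_pi_apply _)) hR

/-- The probability that a chain of `n+1` i.i.d. points satisfies all `n` consecutive
pair relations equals `c ^ n`, when each slice of the relation has measure `c`. -/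
lemma chain_pi_measure (μ : Measure α) [IsProbabilityMeasure μ]
    {R : Set (α × α)} (hR : MeasurableSet R) {c : ℝ≥0∞}
    (hc : ∀ x : α, μ {y | (x, y) ∈ R} = c) :
    ∀ n : ℕ, Measure.pi (fun _ : Fin (n + 1) => μ)
      {f | ∀ t : Fin n, (f t.castSucc, f t.succ) ∈ R} = c ^ n := by
  intro n
  induction n with
  | zero =>
    have huniv : {f : Fin 1 → α | ∀ t : Fin 0, (f t.castSucc, f t.succ) ∈ R} = univ :=
      eq_univ_of_forall fun f t => t.elim0
    rw [huniv, pow_zero]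
    exact measure_univ
  | succ n ih =>
    set ν : Measure (Fin (n + 1) → α) := Measure.pi (fun _ : Fin (n + 1) => μ) with hν
    set S : Set (Fin (n + 2) → α) :=
      {f | ∀ t : Fin (n + 1), (f t.castSucc, f t.succ) ∈ R} with hS
    set S' : Set (Fin (n + 1) → α) :=
      {f | ∀ t : Fin n, (f t.castSucc, f t.succ) ∈ R} with hS'
    have hSmeas : MeasurableSet S := chainSet_measurable hR (n + 1)
    have hS'meas : MeasurableSet S' := chainSet_measurable hR n
    set e := MeasurableEquiv.piFinSuccAbove (fun _ : Fin (n + 2) => α) (Fin.last (n + 1))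
      with he
    have hmp := measurePreserving_piFinSuccAbove (fun _ : Fin (n + 2) => μ) (Fin.last (n + 1))
    -- describe T := e.symm ⁻¹' S
    have hsnoc : ∀ (y : α) (g : Fin (n + 1) → α), e.symm (y, g) = Fin.snoc g y := by
      intro y g
      show (Fin.insertNthEquiv (fun _ : Fin (n + 2) => α) (Fin.last (n + 1))) (y, g)
        = Fin.snoc g y
      simp [Fin.insertNthEquiv, Fin.insertNth_last']
    have hTdesc : e.symm ⁻¹' S
        = {p : α × (Fin (n + 1) → α) | p.2 ∈ S' ∧ (p.2 (Fin.last n), p.1) ∈ R} := by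
      ext ⟨y, g⟩
      simp only [Set.mem_preimage, hsnoc, hS, Set.mem_setOf_eq]
      constructor
      · intro h
        refine ⟨fun t => ?_, ?_⟩
        · have := h t.castSucc
          rwa [Fin.succ_castSucc, Fin.snoc_castSucc, Fin.snoc_castSucc] at this
        · have := h (Fin.last n)
          rwa [Fin.succ_last, Fin.snoc_castSucc, Fin.snoc_last] at this
      · rintro ⟨h1, h2⟩ t
        refine Fin.lastCases ?_ ?_ t
        · rwa [Fin.succ_last, Fin.snoc_castSucc, Fin.snoc_last]
        · intro s
          rw [Fin.succ_castSucc, Fin.snoc_castSucc, Fin.snoc_castSucc]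
          exact h1 s
    have hTmeas : MeasurableSet (e.symm ⁻¹' S) := e.symm.measurable hSmeas
    have key : Measure.pi (fun _ : Fin (n + 2) => μ) S = (μ.prod ν) (e.symm ⁻¹' S) := by
      have h1 : e ⁻¹' (e.symm ⁻¹' S) = S := by ext f; simp
      have h2 := hmp.measure_preimage hTmeas.nullMeasurableSet
      rw [show ⇑(MeasurableEquiv.piFinSuccAbove (fun _ : Fin (n + 2) => α) (Fin.last (n + 1)))
        = ⇑e from rfl, h1] at h2
      exact h2
    rw [key, Measure.prod_apply_symm hTmeas]
    have hinner : ∀ g : Fin (n + 1) → α,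
        μ ((fun y => (y, g)) ⁻¹' (e.symm ⁻¹' S)) = S'.indicator (fun _ => c) g := by
      intro g
      by_cases hg : g ∈ S'
      · have : (fun y => (y, g)) ⁻¹' (e.symm ⁻¹' S) = {y | (g (Fin.last n), y) ∈ R} := by
          ext y
          simp only [Set.mem_preimage, hTdesc, Set.mem_setOf_eq]
          exact ⟨fun h => h.2, fun h => ⟨hg, h⟩⟩
        rw [this, hc, Set.indicator_of_mem hg]
      · have : (fun y => (y, g)) ⁻¹' (e.symm ⁻¹' S) = ∅ := by
          ext y
          simp only [Set.mem_preimage, hTdesc, Set.mem_setOf_eq, Set.mem_empty_iff_false,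
            iff_false]
          exact fun h => hg h.1
        rw [this, measure_empty, Set.indicator_of_notMem hg]
    calc ∫⁻ g, μ ((fun y => (y, g)) ⁻¹' (e.symm ⁻¹' S)) ∂ν
        = ∫⁻ g, S'.indicator (fun _ => c) g ∂ν := by
          exact lintegral_congr hinner
      _ = c * ν S' := lintegral_indicator_const hS'meas c
      _ = c ^ (n + 1) := by rw [ih, pow_succ, mul_comm]

end Chain

section TorusFacts

open Set

local notation "AC" => AddCircle (1 : ℝ)

lemma arc_volume {a b : ℝ} (ha : 0 ≤ a) (hab : a < b) (hb : b < 1) :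
    volume (((↑) : ℝ → AC) '' Ioo a b) = ENNReal.ofReal (b - a) := by
  haveI : Fact ((0 : ℝ) < 1) := ⟨one_pos⟩
  have hmeas : MeasurableSet (((↑) : ℝ → AC) '' Ioo a b) :=
    (QuotientAddGroup.isOpenMap_coe _ isOpen_Ioo).measurableSet
  have hmp := AddCircle.measurePreserving_mk (1 : ℝ) 0
  have h := hmp.measure_preimage hmeas.nullMeasurableSet
  have hpre : ((↑) : ℝ → AC) ⁻¹' (((↑) : ℝ → AC) '' Ioo a b) ∩ Ioc 0 (0 + 1) = Ioo a b := by
    ext x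
    constructor
    · rintro ⟨⟨u, hu, hux⟩, hx⟩
      rcases lt_or_eq_of_le hx.2 with h1 | h1
      · have hu' : u ∈ Ico (0 : ℝ) (0 + 1) :=
          ⟨le_trans ha hu.1.le, by simpa using lt_trans hu.2 hb⟩
        have hx' : x ∈ Ico (0 : ℝ) (0 + 1) := ⟨hx.1.le, by simpa using h1⟩
        have : u = x := (AddCircle.coe_eq_coe_iff_of_mem_Ico hu' hx').mp hux
        exact this ▸ hu
      · exfalso
        have hx1 : ((x : ℝ) : AC) = ((0 : ℝ) : AC) := by
          rw [h1]
          have h2 : ((1 : ℝ) : AC) = 0 := AddCircle.coe_period (p := (1 : ℝ))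
          simp [h2]
        have hu' : u ∈ Ico (0 : ℝ) (0 + 1) :=
          ⟨le_trans ha hu.1.le, by simpa using lt_trans hu.2 hb⟩
        have h0' : (0 : ℝ) ∈ Ico (0 : ℝ) (0 + 1) := ⟨le_refl _, by simpa using one_pos⟩
        have hu0 : u = 0 := (AddCircle.coe_eq_coe_iff_of_mem_Ico hu' h0').mp (hux.trans hx1)
        exact (lt_of_le_of_lt ha hu.1).ne' hu0
    · intro hx
      exact ⟨⟨x, hx, rfl⟩, ⟨lt_of_le_of_lt ha hx.1, by simpa using (hx.2.trans hb).le⟩⟩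
  rw [← h, Measure.restrict_apply (AddCircle.measurable_mk' hmeas), hpre, Real.volume_Ioo]

variable {d : ℕ} {r : ℝ}

/-- The interval for coordinate `j` of box `i`. -/
def boxArc (r : ℝ) (i j : Fin d) : Set AC :=
  ((↑) : ℝ → AC) '' (if j = i then Ioo r (2 * r) else Ioo 0 r)

lemma inTorusBox_iff (x : Fin d → AC) (i : Fin d) (y : Fin d → AC) :
    inTorusBox d r (WithLp.toLp 2 x) i (WithLp.toLp 2 y) ↔ ∀ j : Fin d, y j - x j ∈ boxArc r i j := by
  constructor
  · rintro ⟨u, hyu, hui, huj⟩ j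
    have hyj : y j = x j + (u j : AC) := congrArg (fun z : Torus d => WithLp.ofLp z j) hyu
    have hsub : y j - x j = (u j : AC) := by rw [hyj]; abel
    rw [hsub, boxArc]
    by_cases hj : j = i
    · subst hj
      rw [if_pos rfl]
      exact ⟨u j, ⟨hui.1, hui.2⟩, rfl⟩
    · rw [if_neg hj]
      exact ⟨u j, ⟨(huj j hj).1, (huj j hj).2⟩, rfl⟩
  · intro h
    choose u hu hmk using fun j => h j
    refine ⟨u, ?_, ?_, ?_⟩
    · show WithLp.toLp 2 y = WithLp.toLp 2 (x + fun j => (u j : AC))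
      congr 1
      funext j
      show y j = x j + (u j : AC)
      rw [hmk j]; abel
    · have := hu i
      rwa [if_pos rfl] at this
    · intro j hj
      have := hu j
      rwa [if_neg hj] at this

lemma boxArc_volume (hr0 : 0 < r) (hr1 : 2 * r < 1) (i j : Fin d) :
    volume (boxArc r i j) = ENNReal.ofReal r := by
  rw [boxArc]
  by_cases hj : j = i
  · rw [if_pos hj, arc_volume hr0.le (by linarith) hr1, show 2 * r - r = r by ring]
  · rw [if_neg hj, arc_volume le_rfl hr0 (by linarith), sub_zero]

lemma boxArc_measurable (i j : Fin d) : MeasurableSet (boxArc r i j) := by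
  show MeasurableSet (((↑) : ℝ → AC) '' (if j = i then Ioo r (2 * r) else Ioo 0 r))
  have hopen : IsOpen (if j = i then Ioo r (2 * r) else Ioo 0 r) := by
    split <;> exact isOpen_Ioo
  exact (QuotientAddGroup.isOpenMap_coe _ hopen).measurableSet

lemma torusBox_eq (x : Fin d → AC) (i : Fin d) :
    {y : Fin d → AC | inTorusBox d r (WithLp.toLp 2 x) i (WithLp.toLp 2 y)}
      = (fun y : Fin d → AC => y - x) ⁻¹' Set.pi univ (boxArc r i) := by
  ext y
  rw [Set.mem_setOf_eq, inTorusBox_iff, Set.mem_preimage, Set.mem_pi]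
  constructor
  · intro h j _; exact h j
  · intro h j; exact h j (Set.mem_univ j)

lemma sub_measurable (x : Fin d → AC) :
    Measurable (fun y : Fin d → AC => y - x) := by
  refine measurable_pi_iff.mpr fun j => ?_
  show Measurable fun y : Fin d → AC => y j - x j
  exact (measurable_pi_apply (X := fun _ : Fin d => AC) j).sub_const (x j)

lemma torusBox_volume (hr0 : 0 < r) (hr1 : 2 * r < 1) (x : Fin d → AC) (i : Fin d) :
    volume {y : Fin d → AC | inTorusBox d r (WithLp.toLp 2 x) i (WithLp.toLp 2 y)} = ENNReal.ofReal r ^ d := by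
  rw [torusBox_eq]
  have h2 : (fun y : Fin d → AC => y - x) = (fun y : Fin d → AC => (-x) + y) := by
    funext y; rw [sub_eq_neg_add]
  rw [h2, measure_preimage_add]
  have h3 : (volume : Measure (Fin d → AC)) = Measure.pi fun _ => volume := rfl
  rw [h3, Measure.pi_pi]
  rw [Finset.prod_congr rfl fun j _ => boxArc_volume hr0 hr1 i j]
  simp

lemma torusBoxes_disjoint (hr0 : 0 < r) (hr1 : 2 * r < 1) (x : Fin d → AC) :
    Pairwise (Function.onFun Disjoint fun i => {y : Fin d → AC | inTorusBox d r (WithLp.toLp 2 x) i (WithLp.toLp 2 y)}) := by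
  haveI : Fact ((0 : ℝ) < 1) := ⟨one_pos⟩
  intro i i' hii'
  rw [Function.onFun, Set.disjoint_left]
  intro y hy hy'
  have h1 := (inTorusBox_iff x i y).mp hy i
  have h2 := (inTorusBox_iff x i' y).mp hy' i
  rw [boxArc, if_pos rfl] at h1
  rw [boxArc, if_neg hii'] at h2
  obtain ⟨u, hu, huy⟩ := h1
  obtain ⟨u', hu', huy'⟩ := h2
  have h3 : ((u : ℝ) : AC) = ((u' : ℝ) : AC) := huy.trans huy'.symm
  have hu'' : u ∈ Ico (0 : ℝ) (0 + 1) := ⟨(hr0.trans hu.1).le, by simpa using hu.2.trans hr1⟩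
  have hu''' : u' ∈ Ico (0 : ℝ) (0 + 1) := ⟨hu'.1.le, by simpa using hu'.2.trans (by linarith)⟩
  have : u = u' := (AddCircle.coe_eq_coe_iff_of_mem_Ico hu'' hu''').mp h3
  subst this
  exact absurd (hu'.2.trans hu.1) (lt_irrefl u)

lemma torus_union_volume (hr0 : 0 < r) (hr1 : 2 * r < 1) (x : Fin d → AC) :
    volume {y : Fin d → AC | ∃ i, inTorusBox d r (WithLp.toLp 2 x) i (WithLp.toLp 2 y)}
      = (d : ℝ≥0∞) * ENNReal.ofReal r ^ d := by
  have hU : {y : Fin d → AC | ∃ i, inTorusBox d r (WithLp.toLp 2 x) i (WithLp.toLp 2 y)}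
      = ⋃ i : Fin d, {y : Fin d → AC | inTorusBox d r (WithLp.toLp 2 x) i (WithLp.toLp 2 y)} := by
    ext y; simp [Set.mem_iUnion]
  have hmeas : ∀ i : Fin d, MeasurableSet {y : Fin d → AC | inTorusBox d r (WithLp.toLp 2 x) i (WithLp.toLp 2 y)} := by
    intro i
    rw [torusBox_eq]
    exact (sub_measurable x) (MeasurableSet.univ_pi fun j => boxArc_measurable i j)
  rw [hU, measure_iUnion (torusBoxes_disjoint hr0 hr1 x) hmeas]
  rw [tsum_fintype]
  rw [Finset.sum_congr rfl fun i _ => torusBox_volume hr0 hr1 x i]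
  simp [mul_comm]

lemma torusBox_slice_measurable :
    MeasurableSet {p : ((Fin d → AC)) × (Fin d → AC) | ∃ i, inTorusBox d r (WithLp.toLp 2 p.1) i (WithLp.toLp 2 p.2)} := by
  have h : {p : ((Fin d → AC)) × (Fin d → AC) | ∃ i, inTorusBox d r (WithLp.toLp 2 p.1) i (WithLp.toLp 2 p.2)}
      = ⋃ i : Fin d, (fun p : (Fin d → AC) × (Fin d → AC) => p.2 - p.1) ⁻¹'
          Set.pi univ (boxArc r i) := by
    ext ⟨x, y⟩
    simp only [Set.mem_setOf_eq, Set.mem_iUnion, Set.mem_preimage, Set.mem_pi]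
    constructor
    · rintro ⟨i, hi⟩
      exact ⟨i, fun j _ => (inTorusBox_iff x i y).mp hi j⟩
    · rintro ⟨i, hi⟩
      exact ⟨i, (inTorusBox_iff x i y).mpr fun j => hi j (Set.mem_univ j)⟩
  rw [h]
  refine MeasurableSet.iUnion fun i => ?_
  have hsub : Measurable (fun p : (Fin d → AC) × (Fin d → AC) => p.2 - p.1) := by
    refine measurable_pi_iff.mpr fun j => ?_
    exact ((measurable_pi_apply j).comp measurable_snd).sub
      ((measurable_pi_apply j).comp measurable_fst)
  exact hsub (MeasurableSet.univ_pi fun j => boxArc_measurable i j)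

end TorusFacts

/-- If `X_1, …, X_{K+2}` are i.i.d. Haar-uniform points of the torus (indexed here by
`Fin (K+2)`, with `t.castSucc` the paper's `x_t` and `t.succ` the paper's `x_{t+1}`) and
`r = 1/(4K+4)`, then the probability that there is a string `(i_1,…,i_{K+1}) ∈ [d]^{K+1}`
with `X_{t+1} ∈ C(X_t, i_t, r)` for every `t` equals `d^{K+1}·(4K+4)^{−d(K+1)}`. -/
theorem prob_torus_staircase (d K : ℕ) (hd : 1 ≤ d) (hK : 1 ≤ K)
    (r : ℝ) (hr : r = 1 / (4 * K + 4))
    {Ω : Type} [MeasurableSpace Ω] (ℙ : Measure Ω) [IsProbabilityMeasure ℙ]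
    (X : Fin (K + 2) → Ω → Torus d) (hmeas : ∀ t, Measurable (X t))
    (hindep : ProbabilityTheory.iIndepFun X ℙ)
    (hlaw : ∀ t, ℙ.map (X t) = volume) :
    ℙ {ω | ∃ is : Fin (K + 1) → Fin d,
        ∀ t : Fin (K + 1), inTorusBox d r (X t.castSucc ω) (is t) (X t.succ ω)}
      = (d : ℝ≥0∞) ^ (K + 1) / ((4 * (K : ℝ≥0∞) + 4) ^ (d * (K + 1))) := by
  have hKpos : (0 : ℝ) < 4 * K + 4 := by positivity
  have hr0 : 0 < r := by rw [hr]; positivity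
  have hr1 : 2 * r < 1 := by
    have hK' : (1 : ℝ) ≤ K := by exact_mod_cast hK
    rw [hr, mul_one_div, div_lt_one hKpos]
    linarith
  set R : Set ((Fin d → AddCircle (1 : ℝ)) × (Fin d → AddCircle (1 : ℝ))) :=
    {p | ∃ i, inTorusBox d r (WithLp.toLp 2 p.1) i (WithLp.toLp 2 p.2)} with hR
  have hRmeas : MeasurableSet R := torusBox_slice_measurable
  have hc : ∀ x : Fin d → AddCircle (1 : ℝ), volume {y | (x, y) ∈ R}
      = (d : ℝ≥0∞) * ENNReal.ofReal r ^ d := fun x => torus_union_volume hr0 hr1 x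
  have hEvent : {ω | ∃ is : Fin (K + 1) → Fin d,
        ∀ t : Fin (K + 1), inTorusBox d r (X t.castSucc ω) (is t) (X t.succ ω)}
      = (fun ω => fun t => (WithLp.ofLp (X t ω) : Fin d → AddCircle (1 : ℝ))) ⁻¹'
        {f : Fin (K + 2) → Fin d → AddCircle (1 : ℝ) |
          ∀ t : Fin (K + 1), (f t.castSucc, f t.succ) ∈ R} := by
    ext ω
    simp only [Set.mem_setOf_eq, Set.mem_preimage, hR]
    constructor
    · rintro ⟨is, h⟩ t; exact ⟨is t, h t⟩
    · intro h; exact ⟨fun t => (h t).choose, fun t => (h t).choose_spec⟩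
  rw [hEvent]
  have hJ : Measurable (fun ω => fun t => (WithLp.ofLp (X t ω) : Fin d → AddCircle (1 : ℝ))) :=
    measurable_pi_iff.mpr fun t => (WithLp.measurable_ofLp 2 _).comp (hmeas t)
  have hSmeas := chainSet_measurable hRmeas (K + 1)
  rw [← Measure.map_apply hJ hSmeas]
  have hmap : ℙ.map (fun ω => fun t => (WithLp.ofLp (X t ω) : Fin d → AddCircle (1 : ℝ)))
      = Measure.pi (fun _ : Fin (K + 2)
          => (volume : Measure (Fin d → AddCircle (1 : ℝ)))) := by
    refine (Measure.pi_eq fun s hs => ?_).symm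
    rw [Measure.map_apply hJ (MeasurableSet.univ_pi hs)]
    have hpre : (fun ω => fun t => (WithLp.ofLp (X t ω) : Fin d → AddCircle (1 : ℝ))) ⁻¹' Set.pi Set.univ s
        = ⋂ t ∈ Finset.univ, X t ⁻¹' (WithLp.ofLp ⁻¹' s t) := by
      ext ω; simp [Set.mem_pi]
    have hs' : ∀ t, MeasurableSet (WithLp.ofLp (p := 2) ⁻¹' s t) :=
      fun t => WithLp.measurable_ofLp 2 _ (hs t)
    rw [hpre, hindep.measure_inter_preimage_eq_mul Finset.univ (fun t _ => hs' t)]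
    refine Finset.prod_congr rfl fun t _ => ?_
    rw [← Measure.map_apply (hmeas t) (hs' t), hlaw t]
    show (Measure.map (WithLp.toLp 2) volume) _ = _
    rw [Measure.map_apply (WithLp.measurable_toLp 2 _) (hs' t)]
    rfl
  rw [hmap]
  refine Eq.trans (chain_pi_measure volume hRmeas hc (K + 1)) ?_
  -- arithmetic
  have hofr : ENNReal.ofReal r = (4 * (K : ℝ≥0∞) + 4)⁻¹ := by
    rw [hr, one_div, ENNReal.ofReal_inv_of_pos hKpos]
    congr 1
    have : (4 * (K : ℝ) + 4) = ((4 * K + 4 : ℕ) : ℝ) := by push_cast; ring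
    rw [this, ENNReal.ofReal_natCast]
    push_cast; ring
  rw [hofr, mul_pow, ← pow_mul, ← ENNReal.inv_pow, div_eq_mul_inv]
end
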